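/- Let b > 0 and consider the equilateral triangle in ℝ² with vertices A = (0, √3·b), B = (−b, 0), C = (b, 0). Then for every point P ∈ ℝ², W(P) ≥ b², with equality if and only if P = (0, (√3/3)·b), which is the incenter of the triangle. -/

import Mathlib

noncomputable section

/-- The point `(x, y)` of the Euclidean plane `ℝ²`. -/
def pt (x y : ℝ) : EuclideanSpace ℝ (Fin 2) :=
  (WithLp.equiv 2 (Fin 2 → ℝ)).symm ![x, y]

/-- The line through `X` and `Y`, i.e. the affine span of `{X, Y}`, as a set. -/
def lineThrough (X Y : EuclideanSpace ℝ (Fin 2)) : Set (EuclideanSpace ℝ (Fin 2)) :=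
  (affineSpan ℝ {X, Y} : AffineSubspace ℝ (EuclideanSpace ℝ (Fin 2)))

/-- The distance sum function of the triangle `ABC`:
`V(P) = dist(P, line BC) + dist(P, line CA) + dist(P, line AB)`. -/
def vSum (A B C P : EuclideanSpace ℝ (Fin 2)) : ℝ :=
  Metric.infDist P (lineThrough B C) + Metric.infDist P (lineThrough C A) +
    Metric.infDist P (lineThrough A B)

/-- The squared-distance sum function of the triangle `ABC`:
`W(P) = dist(P, line BC)² + dist(P, line CA)² + dist(P, line AB)²`. -/
def wSum (A B C P : EuclideanSpace ℝ (Fin 2)) : ℝ :=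
  Metric.infDist P (lineThrough B C) ^ 2 + Metric.infDist P (lineThrough C A) ^ 2 +
    Metric.infDist P (lineThrough A B) ^ 2

/-- The equilateral case of Conclusion 2: for the equilateral triangle with vertices
`(0, √3·b)`, `(−b,0)`, `(b,0)` the minimal sum of squared distances from the sides is `b²`,
attained exactly at `(0, (√3/3)·b)`, which is the incenter of the triangle (the interior
point equidistant from the three side lines). -/

@[simp] lemma pt_apply0 (x y : ℝ) : pt x y 0 = x := rfl
@[simp] lemma pt_apply1 (x y : ℝ) : pt x y 1 = y := rfl

lemma eq_pt_iff (P : EuclideanSpace ℝ (Fin 2)) (x y : ℝ) :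
    P = pt x y ↔ P 0 = x ∧ P 1 = y := by
  constructor
  · rintro rfl; exact ⟨rfl, rfl⟩
  · rintro ⟨h0, h1⟩
    ext i
    fin_cases i <;> simpa

lemma infDist_line (X Y P n : EuclideanSpace ℝ (Fin 2)) (hn : ‖n‖ = 1)
    (ho : (inner ℝ n (Y - X) : ℝ) = 0) (hne : Y - X ≠ 0) :
    Metric.infDist P (lineThrough X Y) = |(inner ℝ n (P - X) : ℝ)| := by
  have hn0 : n ≠ 0 := by intro h; rw [h, norm_zero] at hn; norm_num at hn
  have hsne : (lineThrough X Y).Nonempty := ⟨X, left_mem_affineSpan_pair ℝ X Y⟩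
  set c : ℝ := inner ℝ n (P - X) with hc
  have key : ∀ q ∈ lineThrough X Y, (inner ℝ n (P - q) : ℝ) = c := by
    intro q hq
    have hd : q -ᵥ X ∈ vectorSpan ℝ ({X, Y} : Set (EuclideanSpace ℝ (Fin 2))) := by
      rw [← direction_affineSpan]
      exact AffineSubspace.vsub_mem_direction hq (left_mem_affineSpan_pair ℝ X Y)
    obtain ⟨r, hr⟩ := mem_vectorSpan_pair_rev.1 hd
    have hq' : q = X + r • (Y - X) := by
      have : r • (Y - X) = q - X := by simpa [vsub_eq_sub] using hr
      rw [this]; abel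
    rw [hq', show P - (X + r • (Y - X)) = (P - X) - r • (Y - X) by abel,
      inner_sub_right, real_inner_smul_right, ho, hc]; ring
  apply le_antisymm
  · have hspan : Submodule.span ℝ ({Y - X} : Set (EuclideanSpace ℝ (Fin 2))) = (ℝ ∙ n)ᗮ := by
      apply Submodule.eq_of_le_of_finrank_eq
      · rw [Submodule.span_singleton_le_iff_mem, Submodule.mem_orthogonal]
        intro u hu
        rw [Submodule.mem_span_singleton] at hu
        obtain ⟨r, rfl⟩ := hu
        rw [real_inner_smul_left, ho]; ring
      · have h1 : Module.finrank ℝ (ℝ ∙ n) = 1 := finrank_span_singleton hn0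
        have h2 := Submodule.finrank_add_finrank_orthogonal (K := ℝ ∙ n)
        have h3 : Module.finrank ℝ (EuclideanSpace ℝ (Fin 2)) = 2 := by simp
        have h4 : Module.finrank ℝ
            (Submodule.span ℝ ({Y - X} : Set (EuclideanSpace ℝ (Fin 2)))) = 1 :=
          finrank_span_singleton hne
        omega
    have hQmem : P - c • n ∈ lineThrough X Y := by
      have hz : (inner ℝ n (P - c • n - X) : ℝ) = 0 := by
        rw [show P - c • n - X = (P - X) - c • n by abel, inner_sub_right,
          real_inner_smul_right, real_inner_self_eq_norm_sq, hn]
        simp [hc]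
      have : (P - c • n) - X ∈ Submodule.span ℝ ({Y - X} : Set (EuclideanSpace ℝ (Fin 2))) := by
        rw [hspan, Submodule.mem_orthogonal]
        intro u hu
        rw [Submodule.mem_span_singleton] at hu
        obtain ⟨r, rfl⟩ := hu
        rw [real_inner_smul_left, hz]; ring
      rw [Submodule.mem_span_singleton] at this
      obtain ⟨r, hr⟩ := this
      have hmem := smul_vsub_vadd_mem_affineSpan_pair r X Y
      have : r • (Y -ᵥ X) +ᵥ X = P - c • n := by
        simpa [vsub_eq_sub, vadd_eq_add] using by rw [hr]; abel
      rw [this] at hmem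
      exact hmem
    calc Metric.infDist P (lineThrough X Y) ≤ dist P (P - c • n) :=
          Metric.infDist_le_dist_of_mem hQmem
      _ = |c| := by
          rw [dist_eq_norm, show P - (P - c • n) = c • n by abel, norm_smul, hn]
          simp
  · by_contra h
    push_neg at h
    obtain ⟨q, hq, hlt⟩ := (Metric.infDist_lt_iff hsne).1 h
    have h1 := key q hq
    have : |c| ≤ dist P q := by
      calc |c| = |(inner ℝ n (P - q) : ℝ)| := by rw [h1]
        _ ≤ ‖n‖ * ‖P - q‖ := abs_real_inner_le_norm n (P - q)
        _ = dist P q := by rw [hn, one_mul, dist_eq_norm]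
    linarith

lemma infDist_line' (X Y P : EuclideanSpace ℝ (Fin 2)) (nx ny : ℝ)
    (hn : nx ^ 2 + ny ^ 2 = 1)
    (ho : nx * (Y 0 - X 0) + ny * (Y 1 - X 1) = 0) (hne : Y ≠ X) :
    Metric.infDist P (lineThrough X Y) = |nx * (P 0 - X 0) + ny * (P 1 - X 1)| := by
  have hinner : ∀ u v : EuclideanSpace ℝ (Fin 2),
      (inner ℝ u v : ℝ) = u 0 * v 0 + u 1 * v 1 := by
    intro u v
    simp [PiLp.inner_apply, Fin.sum_univ_two, RCLike.inner_apply]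
    ring
  have hsub : ∀ (u v : EuclideanSpace ℝ (Fin 2)) (i : Fin 2), (u - v) i = u i - v i :=
    fun _ _ _ => rfl
  have h1 : ‖pt nx ny‖ = 1 := by
    rw [EuclideanSpace.norm_eq]
    simp [Fin.sum_univ_two, sq_abs]
    exact hn
  have h2 : (inner ℝ (pt nx ny) (Y - X) : ℝ) = 0 := by
    rw [hinner, hsub, hsub]; simpa using ho
  have h3 : Y - X ≠ 0 := sub_ne_zero.2 hne
  rw [infDist_line X Y P (pt nx ny) h1 h2 h3, hinner, hsub, hsub]
  simp

lemma incenter_mem (b : ℝ) (hb : 0 < b) :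
    pt 0 (Real.sqrt 3 / 3 * b) ∈
      interior (convexHull ℝ
        ({pt 0 (Real.sqrt 3 * b), pt (-b) 0, pt b 0} : Set (EuclideanSpace ℝ (Fin 2)))) := by
  set s := Real.sqrt 3 with hs
  have hs3 : s ^ 2 = 3 := Real.sq_sqrt (by norm_num)
  have hs0 : 0 < s := Real.sqrt_pos.2 (by norm_num)
  set p : Fin 3 → EuclideanSpace ℝ (Fin 2) := ![pt 0 (s * b), pt (-b) 0, pt b 0] with hp
  have hind : AffineIndependent ℝ p := by
    rw [affineIndependent_iff_of_fintype]
    intro w hw hwv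
    rw [Finset.weightedVSub_eq_linear_combination _ hw] at hwv
    have h0 : (∑ i, w i • p i) 0 = (0 : EuclideanSpace ℝ (Fin 2)) 0 := by rw [hwv]
    have h1 : (∑ i, w i • p i) 1 = (0 : EuclideanSpace ℝ (Fin 2)) 1 := by rw [hwv]
    rw [Fin.sum_univ_three] at h0 h1
    simp only [hp] at h0 h1
    have e0 : w 0 * 0 + (w 1 * (-b) + w 2 * b) = 0 := by simpa using h0
    have e1 : w 0 * (s * b) + (w 1 * 0 + w 2 * 0) = 0 := by simpa using h1
    rw [Fin.sum_univ_three] at hw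
    have hw0 : w 0 = 0 := by
      have h : w 0 * (s * b) = 0 := by linarith
      rcases mul_eq_zero.1 h with h | h
      · exact h
      · exact absurd h (mul_pos hs0 hb).ne'
    have h12 : (w 2 - w 1) * b = 0 := by linear_combination e0
    have h12' : w 1 = w 2 := by
      rcases mul_eq_zero.1 h12 with h | h
      · linarith
      · exact absurd h hb.ne'
    have hw1 : w 1 = 0 := by linarith
    have hw2 : w 2 = 0 := by linarith
    intro i
    fin_cases i
    · exact hw0
    · exact hw1
    · exact hw2
  have htot : affineSpan ℝ (Set.range p) = ⊤ := by
    rw [hind.affineSpan_eq_top_iff_card_eq_finrank_add_one]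
    simp
  let B : AffineBasis (Fin 3) ℝ (EuclideanSpace ℝ (Fin 2)) := ⟨p, hind, htot⟩
  have hcent := B.centroid_mem_interior_convexHull
  have hB : ⇑B = p := rfl
  rw [hB] at hcent
  have hrange : Set.range p = {pt 0 (s * b), pt (-b) 0, pt b 0} := by
    ext z
    simp only [Set.mem_range, Set.mem_insert_iff, Set.mem_singleton_iff]
    constructor
    · rintro ⟨i, rfl⟩; fin_cases i <;> simp [hp]
    · rintro (rfl | rfl | rfl)
      exacts [⟨0, rfl⟩, ⟨1, rfl⟩, ⟨2, rfl⟩]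
  have hcentroid : Finset.univ.centroid ℝ p = pt 0 (s / 3 * b) := by
    rw [Finset.centroid_def,
      Finset.affineCombination_eq_linear_combination _ _ _
        (Finset.sum_centroidWeights_eq_one_of_nonempty ℝ _ Finset.univ_nonempty)]
    ext i
    rw [Fin.sum_univ_three]
    fin_cases i <;>
      simp [hp, Finset.centroidWeights] <;> ring
  rw [hrange, hcentroid] at hcent
  exact hcent

theorem stmt_18 (b : ℝ) (hb : 0 < b) :
    (∀ P : EuclideanSpace ℝ (Fin 2),
        b ^ 2 ≤ wSum (pt 0 (Real.sqrt 3 * b)) (pt (-b) 0) (pt b 0) P) ∧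
    (∀ P : EuclideanSpace ℝ (Fin 2),
        wSum (pt 0 (Real.sqrt 3 * b)) (pt (-b) 0) (pt b 0) P = b ^ 2 ↔
          P = pt 0 (Real.sqrt 3 / 3 * b)) ∧
    pt 0 (Real.sqrt 3 / 3 * b) ∈
      interior (convexHull ℝ
        ({pt 0 (Real.sqrt 3 * b), pt (-b) 0, pt b 0} : Set (EuclideanSpace ℝ (Fin 2)))) ∧
    Metric.infDist (pt 0 (Real.sqrt 3 / 3 * b)) (lineThrough (pt (-b) 0) (pt b 0))
        = Metric.infDist (pt 0 (Real.sqrt 3 / 3 * b))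
            (lineThrough (pt b 0) (pt 0 (Real.sqrt 3 * b))) ∧
    Metric.infDist (pt 0 (Real.sqrt 3 / 3 * b))
        (lineThrough (pt b 0) (pt 0 (Real.sqrt 3 * b)))
      = Metric.infDist (pt 0 (Real.sqrt 3 / 3 * b))
          (lineThrough (pt 0 (Real.sqrt 3 * b)) (pt (-b) 0)) := by

  set s := Real.sqrt 3 with hs
  have hs3 : s ^ 2 = 3 := Real.sq_sqrt (by norm_num)
  have hs0 : 0 < s := Real.sqrt_pos.2 (by norm_num)
  set A := pt 0 (s * b) with hA
  set B := pt (-b) 0 with hB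
  set C := pt b 0 with hC
  have hCB : C ≠ B := by
    intro h; have h0 := congrArg (fun v => v 0) h; simp [hB, hC] at h0; linarith
  have hAC : A ≠ C := by
    intro h; have h1 := congrArg (fun v => v 1) h; simp [hA, hC] at h1
    rcases h1 with h | h
    exacts [absurd h hs0.ne', absurd h hb.ne']
  have hBA : B ≠ A := by
    intro h; have h1 := congrArg (fun v => v 1) h; simp [hB, hA] at h1
    rcases h1 with h | h
    exacts [absurd h hs0.ne', absurd h hb.ne']
  have dBC : ∀ P : EuclideanSpace ℝ (Fin 2),
      Metric.infDist P (lineThrough B C) = |P 1| := by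
    intro P
    rw [infDist_line' B C P 0 1 (by norm_num) (by simp [hB, hC]) hCB]
    simp [hB]
  have dCA : ∀ P : EuclideanSpace ℝ (Fin 2),
      Metric.infDist P (lineThrough C A) = |s / 2 * (P 0 - b) + 1 / 2 * P 1| := by
    intro P
    rw [infDist_line' C A P (s / 2) (1 / 2)
      (by linear_combination hs3 / 4)
      (by simp [hA, hC]; ring) hAC]
    simp [hC]
  have dAB : ∀ P : EuclideanSpace ℝ (Fin 2),
      Metric.infDist P (lineThrough A B) = |s / 2 * P 0 - 1 / 2 * (P 1 - s * b)| := by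
    intro P
    rw [infDist_line' A B P (s / 2) (-(1 / 2))
      (by linear_combination hs3 / 4)
      (by simp [hA, hB]; ring) hBA]
    simp [hA]
    ring_nf
  have hW : ∀ P : EuclideanSpace ℝ (Fin 2),
      wSum A B C P = b ^ 2 + 3 / 2 * (P 0) ^ 2 + 3 / 2 * (P 1 - s * b / 3) ^ 2 := by
    intro P
    rw [wSum, dBC P, dCA P, dAB P, sq_abs, sq_abs, sq_abs]
    linear_combination ((P 0) ^ 2 / 2 + b ^ 2 / 3) * hs3
  refine ⟨?_, ?_, ?_, ?_, ?_⟩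
  · intro P
    rw [hW P]
    nlinarith [sq_nonneg (P 0), sq_nonneg (P 1 - s * b / 3)]
  · intro P
    rw [hW P]
    constructor
    · intro h
      rw [eq_pt_iff]
      constructor
      · nlinarith [sq_nonneg (P 0), sq_nonneg (P 1 - s * b / 3)]
      · have : P 1 = s * b / 3 := by
          nlinarith [sq_nonneg (P 0), sq_nonneg (P 1 - s * b / 3)]
        rw [this]; ring
    · intro h
      rw [h]
      simp
      ring_nf
  · exact incenter_mem b hb
  · rw [dBC, dCA]
    simp only [pt_apply0, pt_apply1]
    rw [show s / 2 * (0 - b) + 1 / 2 * (s / 3 * b) = -(s / 3 * b) by ring, abs_neg]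
  · rw [dCA, dAB]
    simp only [pt_apply0, pt_apply1]
    rw [show s / 2 * (0 - b) + 1 / 2 * (s / 3 * b) = -(s / 3 * b) by ring, abs_neg,
      show s / 2 * 0 - 1 / 2 * (s / 3 * b - s * b) = s / 3 * b by ring]
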